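/- Let d ≥ 2. For integers 1 ≤ k ≤ n and 1 ≤ l ≤ n, let α(k,l) be the multi-degree whose l-th entry is k(d−1) and whose other entries are 0, and let J_{α(k,l)} ∈ R be the coefficient of x_l^{k(d−1)} in Jac(f). Then J_{α(k,l)} = (−d)^k · Σ_{1 ≤ i_1 < i_2 < ⋯ < i_k ≤ n} |A|_{(i_1,…,i_k)} · Π_{r=1}^k a_{i_r,l}^{d−1}, where |A|_{(i_1,…,i_k)} denotes the principal minor of A on rows and columns i_1,…,i_k. -/

import Mathlib

open MvPolynomial Matrix

noncomputable section

/-- `R n` is the polynomial ring `ℚ[a_{i,j} : 1 ≤ i,j ≤ n]`. -/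
abbrev JacR (n : ℕ) : Type := MvPolynomial (Fin n × Fin n) ℚ

/-- The `i`-th component of the degree `d`-linear map:
`f_i = x_i - (∑_j a_{i,j} x_j)^d`, as a polynomial in `x_1,…,x_n` over `R n`. -/
def degLinMap (n d : ℕ) (i : Fin n) : MvPolynomial (Fin n) (JacR n) :=
  X i - (∑ j : Fin n, C (X (i, j) : JacR n) * X j) ^ d

/-- The differential `D(f)`, with `(D(f))_{i,j} = ∂f_i/∂x_j`. -/
def diffMat (n d : ℕ) : Matrix (Fin n) (Fin n) (MvPolynomial (Fin n) (JacR n)) :=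
  fun i j => pderiv j (degLinMap n d i)

/-- The Jacobian `Jac(f) = det(D(f))`. -/
def jacPoly (n d : ℕ) : MvPolynomial (Fin n) (JacR n) := (diffMat n d).det

/-- The matrix `A` with entries the indeterminates `a_{i,j}`. -/
def Amat (n : ℕ) : Matrix (Fin n) (Fin n) (JacR n) := fun i j => X (i, j)

namespace Stmt2Aux

/-- The linear form `L_i = ∑_j a_{i,j} x_j`. -/
def L (n : ℕ) (i : Fin n) : MvPolynomial (Fin n) (JacR n) :=
  ∑ j : Fin n, C (X (i, j) : JacR n) * X j

lemma pderiv_L (n : ℕ) (i j : Fin n) : pderiv j (L n i) = C (X (i, j)) := by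
  rw [L, map_sum, Finset.sum_eq_single j]
  · simp
  · intro b _ hb; rw [pderiv_C_mul, pderiv_X_of_ne hb, mul_zero]
  · simp

/-- The matrix `M` with `diffMat = 1 + M`. -/
def M (n d : ℕ) : Matrix (Fin n) (Fin n) (MvPolynomial (Fin n) (JacR n)) :=
  Matrix.of fun i j => (-(C (d : JacR n) * (L n i) ^ (d - 1))) * C (X (i, j))

lemma det_canon {m : Type*} {R : Type*} [CommRing R] (D : DecidableEq m) (F : Fintype m)
    [D' : DecidableEq m] [F' : Fintype m] (A : Matrix m m R) :
    @Matrix.det m D F R _ A = @Matrix.det m D' F' R _ A := by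
  cases Subsingleton.elim D D'
  cases Subsingleton.elim F F'
  rfl

lemma det_piecewise (n d : ℕ) (s : Finset (Fin n)) :
    (Matrix.of (s.piecewise (M n d) (1 : Matrix (Fin n) (Fin n) (MvPolynomial (Fin n) (JacR n))))).det
      = (∏ i ∈ s, (-(C (d : JacR n) * (L n i) ^ (d - 1)))) *
        C (((Amat n).submatrix (Subtype.val : {x // x ∈ s} → Fin n) Subtype.val).det) := by
  classical
  set B := Matrix.of (s.piecewise (M n d) (1 : Matrix (Fin n) (Fin n) (MvPolynomial (Fin n) (JacR n)))) with hB
  have hBa : ∀ i j, B i j = s.piecewise (M n d) (1 : Matrix (Fin n) (Fin n) (MvPolynomial (Fin n) (JacR n))) i j := fun i j => rfl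
  have h0 : ∀ i, ¬ i ∈ s → ∀ j, j ∈ s → B i j = 0 := by
    intro i hi j hj
    erw [hBa, s.piecewise_eq_of_notMem _ _ hi]
    have hne : i ≠ j := fun h => hi (h ▸ hj)
    exact Matrix.one_apply_ne hne
  rw [Matrix.twoBlockTriangular_det B (· ∈ s) h0]
  have h2 : (toSquareBlockProp B (fun i => ¬ i ∈ s)) = 1 := by
    apply Matrix.ext
    rintro ⟨i, hi⟩ ⟨j, hj⟩
    show B i j = _
    erw [hBa, s.piecewise_eq_of_notMem _ _ hi]
    simp [Matrix.one_apply, Subtype.ext_iff]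
  rw [h2, det_one, mul_one]
  have h1 : (toSquareBlockProp B (fun i => i ∈ s)) =
      Matrix.of (fun i j : {x // x ∈ s} =>
        (-(C (d : JacR n) * (L n ↑i) ^ (d - 1))) *
          (((Amat n).submatrix (Subtype.val : {x // x ∈ s} → Fin n) Subtype.val).map C) i j) := by
    apply Matrix.ext
    rintro ⟨i, hi⟩ ⟨j, hj⟩
    show B i j = _
    erw [hBa, s.piecewise_eq_of_mem _ _ hi]
    rfl
  have hdet : (((Amat n).submatrix (Subtype.val : {x // x ∈ s} → Fin n) Subtype.val).map
        (C : JacR n → MvPolynomial (Fin n) (JacR n))).det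
      = C (((Amat n).submatrix (Subtype.val : {x // x ∈ s} → Fin n) Subtype.val).det) :=
    (RingHom.map_det (C : JacR n →+* MvPolynomial (Fin n) (JacR n)) _).symm
  rw [h1, det_canon, Matrix.det_mul_column, hdet]
  congr 1
  exact (Finset.prod_subtype s (fun x => Iff.rfl)
    (fun i => -(C (d : JacR n) * (L n i) ^ (d - 1)))).symm

lemma diffMat_eq (n d : ℕ) : diffMat n d = 1 + M n d := by
  ext i j
  simp only [diffMat, degLinMap, M, Matrix.add_apply, Matrix.one_apply, Matrix.of_apply]
  rw [map_sub, pderiv_pow, ← L, pderiv_L]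
  have hc : (d : MvPolynomial (Fin n) (JacR n)) = C (d : JacR n) := by simp
  by_cases h : i = j
  · subst h; rw [pderiv_X_self, if_pos rfl, hc]; ring
  · rw [pderiv_X_of_ne h, if_neg h, hc]; ring

lemma jac_expand (n d : ℕ) : jacPoly n d =
    ∑ s : Finset (Fin n),
      (∏ i ∈ s, (-(C (d : JacR n) * (L n i) ^ (d - 1)))) *
        C (((Amat n).submatrix (Subtype.val : {x // x ∈ s} → Fin n) Subtype.val).det) := by
  rw [jacPoly, diffMat_eq, add_comm]
  have h := (Matrix.detRowAlternating :
      (Fin n → MvPolynomial (Fin n) (JacR n)) [⋀^Fin n]→ₗ[MvPolynomial (Fin n) (JacR n)]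
        MvPolynomial (Fin n) (JacR n)).toMultilinearMap.map_add_univ
      (M n d) (1 : Matrix (Fin n) (Fin n) (MvPolynomial (Fin n) (JacR n)))
  refine h.trans ?_
  exact Finset.sum_congr rfl fun s _ => det_piecewise n d s

lemma coeff_aeval_kill (n : ℕ) (l : Fin n) (m : ℕ) (P : MvPolynomial (Fin n) (JacR n)) :
    coeff (Finsupp.single l m)
      (aeval (fun j => if j = l then (X j : MvPolynomial (Fin n) (JacR n)) else 0) P)
      = coeff (Finsupp.single l m) P := by
  induction P using MvPolynomial.induction_on' with
  | add p q hp hq => rw [map_add, coeff_add, coeff_add, hp, hq]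
  | monomial u a =>
      rw [aeval_monomial]
      by_cases h : ∀ j ∈ u.support, j = l
      · have hu : u = Finsupp.single l (u l) := by
          rw [← Finsupp.support_subset_singleton]
          intro j hj
          simp [h j hj]
        rw [hu, Finsupp.prod_single_index (by simp)]
        rw [if_pos rfl]
        have halg : (algebraMap (JacR n) (MvPolynomial (Fin n) (JacR n))) a = C a := rfl
        rw [halg, C_mul_X_pow_eq_monomial]
      · push_neg at h
        obtain ⟨j, hj, hjl⟩ := h
        have hprod : (u.prod fun j e => (if j = l then (X j : MvPolynomial (Fin n) (JacR n)) else 0) ^ e) = 0 := by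
          apply Finset.prod_eq_zero hj
          show ((if j = l then (X j : MvPolynomial (Fin n) (JacR n)) else 0)) ^ (u j) = 0
          rw [if_neg hjl]
          exact zero_pow (Finsupp.mem_support_iff.mp hj)
        rw [hprod, mul_zero, coeff_zero, coeff_monomial, if_neg]
        intro hc
        apply Finsupp.mem_support_iff.mp hj
        rw [hc]
        exact Finsupp.single_eq_of_ne (fun he => hjl he)

lemma coeff_prod_L (n d : ℕ) (l : Fin n) (s : Finset (Fin n)) (m : ℕ) :
    coeff (Finsupp.single l m) (∏ i ∈ s, (L n i) ^ (d - 1))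
      = if m = s.card * (d - 1) then (∏ i ∈ s, (X (i, l) : JacR n) ^ (d - 1)) else 0 := by
  rw [← coeff_aeval_kill n l m]
  have hL : ∀ i, aeval (fun j => if j = l then (X j : MvPolynomial (Fin n) (JacR n)) else 0) (L n i)
      = C (X (i, l)) * X l := by
    intro i
    rw [L, map_sum, Finset.sum_eq_single l]
    · simp
    · intro b _ hb
      simp [hb]
    · simp
  rw [map_prod]
  simp_rw [map_pow, hL, mul_pow, ← C_pow]
  rw [Finset.prod_mul_distrib, Finset.prod_const, ← pow_mul, ← map_prod, coeff_C_mul,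
    X_pow_eq_monomial, coeff_monomial]
  by_cases h : m = s.card * (d - 1)
  · rw [if_pos h, if_pos, mul_one]
    rw [h, mul_comm]
  · rw [if_neg h, if_neg, mul_zero]
    intro hc
    exact h (((Finsupp.single_injective l) hc).symm.trans (mul_comm _ _))

end Stmt2Aux

/-- for `1 ≤ k ≤ n` and `l ∈ [1,n]`, the coefficient of `x_l^{k(d-1)}` in
`Jac(f)` equals `(-d)^k ∑_{i_1 < ⋯ < i_k} |A|_{(i_1,…,i_k)} ∏_r a_{i_r,l}^{d-1}`. -/
theorem stmt2 (n d : ℕ) (hn : 1 ≤ n) (hd : 2 ≤ d) (k : ℕ) (hk1 : 1 ≤ k) (hk2 : k ≤ n)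
    (l : Fin n) :
    coeff (Finsupp.single l (k * (d - 1))) (jacPoly n d) =
      (-(d : JacR n)) ^ k *
        ∑ s ∈ Finset.univ.powersetCard k,
          ((Amat n).submatrix (Subtype.val : {x // x ∈ s} → Fin n) Subtype.val).det *
            ∏ i ∈ s, (X (i, l) : JacR n) ^ (d - 1) := by
  classical
  rw [Stmt2Aux.jac_expand n d, coeff_sum]
  have hterm : ∀ s : Finset (Fin n),
      (∏ i ∈ s, (-(C (d : JacR n) * (Stmt2Aux.L n i) ^ (d - 1)))) *
          C (((Amat n).submatrix (Subtype.val : {x // x ∈ s} → Fin n) Subtype.val).det)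
        = C ((-(d : JacR n)) ^ s.card *
              ((Amat n).submatrix (Subtype.val : {x // x ∈ s} → Fin n) Subtype.val).det) *
            ∏ i ∈ s, (Stmt2Aux.L n i) ^ (d - 1) := by
    intro s
    have hp : (∏ i ∈ s, (-(C (d : JacR n) * (Stmt2Aux.L n i) ^ (d - 1))))
        = ((-(C (d : JacR n))) ^ s.card * ∏ i ∈ s, (Stmt2Aux.L n i) ^ (d - 1)) := by
      rw [show (∏ i ∈ s, (-(C (d : JacR n) * (Stmt2Aux.L n i) ^ (d - 1))))
            = ∏ i ∈ s, ((-(C (d : JacR n))) * (Stmt2Aux.L n i) ^ (d - 1)) from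
          Finset.prod_congr rfl fun i _ => by ring]
      rw [Finset.prod_mul_distrib, Finset.prod_const]
    rw [hp, _root_.map_mul, map_pow, map_neg]
    ring
  have step : ∀ s : Finset (Fin n),
      coeff (Finsupp.single l (k * (d - 1)))
        ((∏ i ∈ s, (-(C (d : JacR n) * (Stmt2Aux.L n i) ^ (d - 1)))) *
          C (((Amat n).submatrix (Subtype.val : {x // x ∈ s} → Fin n) Subtype.val).det))
      = if s.card = k then
          (-(d : JacR n)) ^ k *
            (((Amat n).submatrix (Subtype.val : {x // x ∈ s} → Fin n) Subtype.val).det *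
              ∏ i ∈ s, (X (i, l) : JacR n) ^ (d - 1))
        else 0 := by
    intro s
    rw [hterm s, coeff_C_mul, Stmt2Aux.coeff_prod_L]
    by_cases hc : s.card = k
    · rw [if_pos (by rw [hc]), if_pos hc, hc]
      ring
    · rw [if_neg, if_neg hc, mul_zero]
      intro he
      exact hc (Nat.eq_of_mul_eq_mul_right (by omega) he.symm)
  rw [Finset.sum_congr rfl (fun s _ => step s), ← Finset.sum_filter]
  rw [show (Finset.univ.filter fun s : Finset (Fin n) => s.card = k)
        = Finset.univ.powersetCard k from by
      rw [Finset.powersetCard_eq_filter, Finset.powerset_univ]]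
  rw [Finset.mul_sum]

end
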